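/- There is a constant C > 0 such that for all real x ≥ 1, |S(x) − 2·M(x)| ≤ C·x^{1/2}, where M(x) = Σ_{m ∈ ℕ, m ≤ √x} r₂(m)·(x − m²)^{1/2}. -/

import Mathlib

open Real

/-- `r₂(m)`: the number of representations of `m` as a sum of two squares of integers. -/
noncomputable def r2 (m : ℕ) : ℕ :=
  Set.ncard {p : ℤ × ℤ | p.1 ^ 2 + p.2 ^ 2 = (m : ℤ)}

/-- `S(x)`: the number of integer points `(a,b,w)` with `(a²+b²)² + w² < x`. -/
noncomputable def S (x : ℝ) : ℕ :=
  Set.ncard {p : ℤ × ℤ × ℤ |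
    (((p.1 : ℝ) ^ 2 + (p.2.1 : ℝ) ^ 2) ^ 2 + (p.2.2 : ℝ) ^ 2) < x}

/-- `M(x) = Σ_{m ∈ ℕ, m ≤ √x} r₂(m)·(x − m²)^{1/2}`. -/
noncomputable def M (x : ℝ) : ℝ :=
  ∑ m ∈ Finset.range (⌊Real.sqrt x⌋₊ + 1),
    (r2 m : ℝ) * (x - (m : ℝ) ^ 2) ^ ((1 : ℝ) / 2)

/- ### Auxiliary definitions -/

/-- The box of integers of absolute value at most `⌊√r⌋₊`. -/
noncomputable def bxI (r : ℝ) : Finset ℤ :=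
  Finset.Icc (-(⌊Real.sqrt r⌋₊ : ℤ)) (⌊Real.sqrt r⌋₊ : ℤ)

/-- The number of integers `w` with `|w| ≤ ⌊√x⌋₊` and `w² < t`. -/
noncomputable def cnt (x t : ℝ) : ℕ :=
  ((bxI x).filter (fun w : ℤ => (w : ℝ) ^ 2 < t)).card

/- ### Auxiliary lemmas -/

lemma cast_natAbs_eq_abs (a : ℤ) : ((a.natAbs : ℕ) : ℝ) = |(a : ℝ)| := by
  rw [Nat.cast_natAbs, Int.cast_abs]

lemma natAbs_le_floor_sqrt (a : ℤ) (r : ℝ) (hr : 0 ≤ r) (h : (a : ℝ) ^ 2 ≤ r) :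
    a.natAbs ≤ ⌊Real.sqrt r⌋₊ := by
  apply Nat.le_floor
  rw [cast_natAbs_eq_abs]
  exact (Real.le_sqrt (abs_nonneg _) hr).2 (by rwa [sq_abs])

lemma mem_bxI {a : ℤ} {r : ℝ} (hr : 0 ≤ r) (h : (a : ℝ) ^ 2 ≤ r) : a ∈ bxI r := by
  have := natAbs_le_floor_sqrt a r hr h
  simp only [bxI, Finset.mem_Icc]
  omega

lemma sqrt_le_self' {x : ℝ} (hx : 1 ≤ x) : Real.sqrt x ≤ x := by
  have hx0 : (0 : ℝ) ≤ x := le_trans zero_le_one hx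
  nlinarith [Real.sq_sqrt hx0, Real.sqrt_nonneg x, sq_nonneg (Real.sqrt x - 1)]

lemma phi_eq (a b : ℤ) : (a ^ 2 + b ^ 2).toNat = a.natAbs ^ 2 + b.natAbs ^ 2 := by
  have h1 : ((a.natAbs : ℤ)) ^ 2 = a ^ 2 := Int.natAbs_sq a
  have h2 : ((b.natAbs : ℤ)) ^ 2 = b ^ 2 := Int.natAbs_sq b
  have key : a ^ 2 + b ^ 2 = ((a.natAbs ^ 2 + b.natAbs ^ 2 : ℕ) : ℤ) := by
    rw [← h1, ← h2]; push_cast; ring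
  rw [key, Int.toNat_natCast]

lemma phi_eq_iff (a b : ℤ) (m : ℕ) :
    (a ^ 2 + b ^ 2).toNat = m ↔ a ^ 2 + b ^ 2 = (m : ℤ) := by
  have hnn : 0 ≤ a ^ 2 + b ^ 2 := by positivity
  set q := a ^ 2 + b ^ 2
  omega

lemma phi_cast (a b : ℤ) :
    (((a ^ 2 + b ^ 2).toNat : ℕ) : ℝ) = (a : ℝ) ^ 2 + (b : ℝ) ^ 2 := by
  rw [phi_eq]
  push_cast [cast_natAbs_eq_abs, sq_abs]
  simp [sq_abs]

lemma r2_eq_card (m : ℕ) (F : Finset (ℤ × ℤ))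
    (h : ∀ p : ℤ × ℤ, p.1 ^ 2 + p.2 ^ 2 = (m : ℤ) → p ∈ F) :
    r2 m = (F.filter (fun p => p.1 ^ 2 + p.2 ^ 2 = (m : ℤ))).card := by
  rw [r2, ← Set.ncard_coe_finset]
  congr 1
  ext p
  simp only [Finset.coe_filter, Set.mem_setOf_eq]
  exact ⟨fun hp => ⟨h p hp, hp⟩, fun hp => hp.2⟩

lemma cnt_eq_zero {x t : ℝ} (ht : t ≤ 0) : cnt x t = 0 := by
  rw [cnt, Finset.card_eq_zero, Finset.filter_eq_empty_iff]
  intro w _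
  have : (0 : ℝ) ≤ (w : ℝ) ^ 2 := sq_nonneg _
  push_neg
  linarith

lemma cnt_bound {x t : ℝ} (hx : 1 ≤ x) (ht0 : 0 ≤ t) (htx : t ≤ x) :
    |(cnt x t : ℝ) - 2 * Real.sqrt t| ≤ 1 := by
  have hx0 : (0 : ℝ) ≤ x := le_trans zero_le_one hx
  rcases eq_or_lt_of_le ht0 with h0 | h0
  · rw [cnt_eq_zero h0.ge, ← h0, Real.sqrt_zero]
    norm_num
  have hst : 0 ≤ Real.sqrt t := Real.sqrt_nonneg t
  -- upper bound
  set k := ⌊Real.sqrt t⌋₊ with hk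
  have hupper : cnt x t ≤ 2 * k + 1 := by
    have hsub : ((bxI x).filter (fun w : ℤ => (w : ℝ) ^ 2 < t))
        ⊆ Finset.Icc (-(k : ℤ)) (k : ℤ) := by
      intro w hw
      rw [Finset.mem_filter] at hw
      have := natAbs_le_floor_sqrt w t ht0 hw.2.le
      simp only [Finset.mem_Icc]
      omega
    calc cnt x t ≤ (Finset.Icc (-(k : ℤ)) (k : ℤ)).card := Finset.card_le_card hsub
      _ = 2 * k + 1 := by
          rw [Int.card_Icc]
          omega
  have hkle : (k : ℝ) ≤ Real.sqrt t := Nat.floor_le hst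
  have hub : (cnt x t : ℝ) ≤ 2 * Real.sqrt t + 1 := by
    have h1 : (cnt x t : ℝ) ≤ ((2 * k + 1 : ℕ) : ℝ) := by exact_mod_cast hupper
    push_cast at h1
    linarith
  -- lower bound
  have hstpos : 0 < Real.sqrt t := Real.sqrt_pos.2 h0
  set c := ⌈Real.sqrt t⌉₊ with hc
  have hc1 : 1 ≤ c := Nat.one_le_ceil_iff.2 hstpos
  set k' := c - 1 with hk'
  have hk'lt : (k' : ℝ) < Real.sqrt t := Nat.lt_ceil.1 (by omega)
  have hk'ge : Real.sqrt t - 1 ≤ (k' : ℝ) := by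
    have h1 : Real.sqrt t ≤ (c : ℝ) := Nat.le_ceil _
    have h2 : (k' : ℝ) = (c : ℝ) - 1 := by
      rw [hk', Nat.cast_sub hc1]
      norm_num
    linarith
  have hlower : 2 * k' + 1 ≤ cnt x t := by
    have hsub : Finset.Icc (-(k' : ℤ)) (k' : ℤ)
        ⊆ (bxI x).filter (fun w : ℤ => (w : ℝ) ^ 2 < t) := by
      intro w hw
      rw [Finset.mem_Icc] at hw
      have habs : w.natAbs ≤ k' := by omega
      have hw2 : (w : ℝ) ^ 2 ≤ (k' : ℝ) ^ 2 := by
        have h1 : w ^ 2 ≤ ((k' : ℕ) : ℤ) ^ 2 := by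
          rw [← Int.natAbs_sq w]
          exact_mod_cast Nat.pow_le_pow_left habs 2
        exact_mod_cast h1
      have hwt : (w : ℝ) ^ 2 < t := by
        have h2 : (k' : ℝ) ^ 2 < t := by
          have := Real.sq_sqrt ht0
          nlinarith
        linarith
      rw [Finset.mem_filter]
      exact ⟨mem_bxI hx0 (by linarith), hwt⟩
    calc 2 * k' + 1 = (Finset.Icc (-(k' : ℤ)) (k' : ℤ)).card := by
          rw [Int.card_Icc]; omega
      _ ≤ cnt x t := Finset.card_le_card hsub
  have hlb : 2 * Real.sqrt t - 1 ≤ (cnt x t : ℝ) := by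
    have h1 : ((2 * k' + 1 : ℕ) : ℝ) ≤ (cnt x t : ℝ) := by exact_mod_cast hlower
    push_cast at h1
    linarith
  rw [abs_le]
  constructor <;> linarith

lemma S_eq (x : ℝ) (hx : 1 ≤ x) :
    S x = ∑ m ∈ Finset.range (⌊Real.sqrt x⌋₊ + 1), r2 m * cnt x (x - (m : ℝ) ^ 2) := by
  have hx0 : (0 : ℝ) ≤ x := le_trans zero_le_one hx
  have hsx0 : (0 : ℝ) ≤ Real.sqrt x := Real.sqrt_nonneg x
  have hsxx : Real.sqrt x ≤ x := sqrt_le_self' hx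
  set N := ⌊Real.sqrt x⌋₊ with hN
  set B := bxI x with hB
  -- Step 1 : S x as a finite box count
  have step1 : S x = ((B ×ˢ B ×ˢ B).filter
      (fun p : ℤ × ℤ × ℤ =>
        ((p.1 : ℝ) ^ 2 + (p.2.1 : ℝ) ^ 2) ^ 2 + (p.2.2 : ℝ) ^ 2 < x)).card := by
    rw [S, ← Set.ncard_coe_finset]
    congr 1
    ext p
    simp only [Set.mem_setOf_eq, Finset.coe_filter, Finset.mem_product]
    constructor
    · intro hp
      have hq : ((p.1 : ℝ) ^ 2 + (p.2.1 : ℝ) ^ 2) ^ 2 ≤ x := by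
        nlinarith [sq_nonneg ((p.2.2 : ℝ))]
      have hy : (p.1 : ℝ) ^ 2 + (p.2.1 : ℝ) ^ 2 ≤ Real.sqrt x :=
        (Real.le_sqrt (by positivity) hx0).2 hq
      refine ⟨⟨?_, ?_, ?_⟩, hp⟩
      · exact mem_bxI hx0 (by nlinarith [sq_nonneg ((p.2.1 : ℝ))])
      · exact mem_bxI hx0 (by nlinarith [sq_nonneg ((p.1 : ℝ))])
      · have hw : (p.2.2 : ℝ) ^ 2 ≤ x := by
          nlinarith [sq_nonneg ((p.1 : ℝ) ^ 2 + (p.2.1 : ℝ) ^ 2)]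
        exact mem_bxI hx0 hw
    · exact fun hp => hp.2
  -- Step 2 : sum over (a,b) of a one-dimensional count
  have step2 : ((B ×ˢ B ×ˢ B).filter
      (fun p : ℤ × ℤ × ℤ =>
        ((p.1 : ℝ) ^ 2 + (p.2.1 : ℝ) ^ 2) ^ 2 + (p.2.2 : ℝ) ^ 2 < x)).card
      = ∑ p ∈ B ×ˢ B, cnt x (x - (((p.1 ^ 2 + p.2 ^ 2).toNat : ℕ) : ℝ) ^ 2) := by
    conv_lhs => rw [Finset.card_filter, Finset.sum_product]
    conv_rhs => rw [Finset.sum_product]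
    refine Finset.sum_congr rfl fun a _ => ?_
    conv_lhs => rw [Finset.sum_product]
    refine Finset.sum_congr rfl fun b _ => ?_
    rw [← Finset.card_filter]
    show (B.filter (fun w : ℤ =>
        ((a : ℝ) ^ 2 + (b : ℝ) ^ 2) ^ 2 + (w : ℝ) ^ 2 < x)).card
      = ((bxI x).filter (fun w : ℤ =>
        (w : ℝ) ^ 2 < x - (((a ^ 2 + b ^ 2).toNat : ℕ) : ℝ) ^ 2)).card
    rw [hB]
    congr 1
    refine Finset.filter_congr fun w _ => ?_
    rw [phi_cast a b]
    constructor <;> intro h <;> linarith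
  -- Step 3 : group by fibers
  have hmaps : ∀ p ∈ B ×ˢ B, (p.1 ^ 2 + p.2 ^ 2).toNat ∈ Finset.range (2 * N ^ 2 + 1) := by
    intro p hp
    rw [Finset.mem_product] at hp
    have h1 : p.1.natAbs ≤ N := by
      have := hp.1
      simp only [hB, bxI, Finset.mem_Icc] at this
      omega
    have h2 : p.2.natAbs ≤ N := by
      have := hp.2
      simp only [hB, bxI, Finset.mem_Icc] at this
      omega
    rw [Finset.mem_range]
    calc (p.1 ^ 2 + p.2 ^ 2).toNat = p.1.natAbs ^ 2 + p.2.natAbs ^ 2 := phi_eq p.1 p.2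
      _ ≤ N ^ 2 + N ^ 2 := Nat.add_le_add (Nat.pow_le_pow_left h1 2) (Nat.pow_le_pow_left h2 2)
      _ = 2 * N ^ 2 := by ring
      _ < 2 * N ^ 2 + 1 := Nat.lt_succ_self _
  have step3 : ∑ p ∈ B ×ˢ B, cnt x (x - (((p.1 ^ 2 + p.2 ^ 2).toNat : ℕ) : ℝ) ^ 2)
      = ∑ m ∈ Finset.range (2 * N ^ 2 + 1),
          ((B ×ˢ B).filter (fun p => (p.1 ^ 2 + p.2 ^ 2).toNat = m)).card
            * cnt x (x - (m : ℝ) ^ 2) := by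
    rw [← Finset.sum_fiberwise_of_maps_to hmaps
      (fun p => cnt x (x - (((p.1 ^ 2 + p.2 ^ 2).toNat : ℕ) : ℝ) ^ 2))]
    refine Finset.sum_congr rfl fun m _ => ?_
    have e1 : ∀ p ∈ (B ×ˢ B).filter (fun i : ℤ × ℤ => (i.1 ^ 2 + i.2 ^ 2).toNat = m),
        cnt x (x - (((p.1 ^ 2 + p.2 ^ 2).toNat : ℕ) : ℝ) ^ 2) = cnt x (x - (m : ℝ) ^ 2) := by
      intro p hp
      rw [Finset.mem_filter] at hp
      rw [hp.2]
    rw [Finset.sum_congr rfl e1, Finset.sum_const, smul_eq_mul]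
  -- Step 4 : terms with m > N vanish
  have step4 : ∑ m ∈ Finset.range (2 * N ^ 2 + 1),
        ((B ×ˢ B).filter (fun p => (p.1 ^ 2 + p.2 ^ 2).toNat = m)).card
          * cnt x (x - (m : ℝ) ^ 2)
      = ∑ m ∈ Finset.range (N + 1),
        ((B ×ˢ B).filter (fun p => (p.1 ^ 2 + p.2 ^ 2).toNat = m)).card
          * cnt x (x - (m : ℝ) ^ 2) := by
    apply (Finset.sum_subset ?_ ?_).symm
    · apply Finset.range_subset_range.2
      have h1 : N ≤ N ^ 2 := Nat.le_self_pow two_ne_zero N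
      omega
    · intro m _ hm
      rw [Finset.mem_range, not_lt] at hm
      have hmN : N < m := by omega
      have hm1 : Real.sqrt x < (m : ℝ) := (Nat.floor_lt hsx0).1 hmN
      have hx2 : x < (m : ℝ) ^ 2 := by
        have := Real.sq_sqrt hx0
        nlinarith
      rw [cnt_eq_zero (by linarith), Nat.mul_zero]
  -- Step 5 : fibers are r2
  have step5 : ∀ m ∈ Finset.range (N + 1),
      ((B ×ˢ B).filter (fun p => (p.1 ^ 2 + p.2 ^ 2).toNat = m)).card = r2 m := by
    intro m hm
    rw [Finset.mem_range] at hm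
    have hmsx : (m : ℝ) ≤ Real.sqrt x := by
      have h1 : m ≤ N := by omega
      calc (m : ℝ) ≤ (N : ℝ) := by exact_mod_cast h1
        _ ≤ Real.sqrt x := Nat.floor_le hsx0
    have hsol : ∀ p : ℤ × ℤ, p.1 ^ 2 + p.2 ^ 2 = (m : ℤ) → p ∈ B ×ˢ B := by
      intro p hpm
      have h1 : (p.1 : ℝ) ^ 2 + (p.2 : ℝ) ^ 2 = (m : ℝ) := by exact_mod_cast hpm
      rw [Finset.mem_product]
      constructor
      · exact mem_bxI hx0 (by nlinarith [sq_nonneg ((p.2 : ℝ))])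
      · exact mem_bxI hx0 (by nlinarith [sq_nonneg ((p.1 : ℝ))])
    rw [r2_eq_card m (B ×ˢ B) hsol]
    congr 1
    exact Finset.filter_congr fun p _ => phi_eq_iff p.1 p.2 m
  rw [step1, step2, step3, step4]
  exact Finset.sum_congr rfl fun m hm => by rw [step5 m hm]

lemma r2sum_le (x : ℝ) (hx : 1 ≤ x) :
    (∑ m ∈ Finset.range (⌊Real.sqrt x⌋₊ + 1), (r2 m : ℝ)) ≤ 9 * Real.sqrt x := by
  have hx0 : (0 : ℝ) ≤ x := le_trans zero_le_one hx
  have hsx0 : (0 : ℝ) ≤ Real.sqrt x := Real.sqrt_nonneg x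
  have hsx1 : (1 : ℝ) ≤ Real.sqrt x := by
    rw [show (1 : ℝ) = Real.sqrt 1 by simp]
    exact Real.sqrt_le_sqrt hx
  set N := ⌊Real.sqrt x⌋₊ with hN
  set SB := bxI (Real.sqrt x) with hSB
  set s := ⌊Real.sqrt (Real.sqrt x)⌋₊ with hs
  set D := (SB ×ˢ SB).filter (fun p : ℤ × ℤ => (p.1 ^ 2 + p.2 ^ 2).toNat ≤ N) with hD
  have step1 : ∀ m ∈ Finset.range (N + 1),
      r2 m = (D.filter (fun p => (p.1 ^ 2 + p.2 ^ 2).toNat = m)).card := by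
    intro m hm
    rw [Finset.mem_range] at hm
    have hmN : m ≤ N := by omega
    have hmsx : (m : ℝ) ≤ Real.sqrt x := by
      calc (m : ℝ) ≤ (N : ℝ) := by exact_mod_cast hmN
        _ ≤ Real.sqrt x := Nat.floor_le hsx0
    have hsol : ∀ p : ℤ × ℤ, p.1 ^ 2 + p.2 ^ 2 = (m : ℤ) → p ∈ SB ×ˢ SB := by
      intro p hpm
      have h1 : (p.1 : ℝ) ^ 2 + (p.2 : ℝ) ^ 2 = (m : ℝ) := by exact_mod_cast hpm
      rw [Finset.mem_product]
      constructor
      · exact mem_bxI hsx0 (by nlinarith [sq_nonneg ((p.2 : ℝ))])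
      · exact mem_bxI hsx0 (by nlinarith [sq_nonneg ((p.1 : ℝ))])
    rw [r2_eq_card m (SB ×ˢ SB) hsol]
    congr 1
    rw [hD, Finset.filter_filter]
    refine Finset.filter_congr fun p _ => ?_
    constructor
    · intro h2
      have h3 : (p.1 ^ 2 + p.2 ^ 2).toNat = m := (phi_eq_iff p.1 p.2 m).2 h2
      exact ⟨by omega, h3⟩
    · rintro ⟨_, h2⟩
      exact (phi_eq_iff p.1 p.2 m).1 h2
  have step2 : ∑ m ∈ Finset.range (N + 1),
      (D.filter (fun p => (p.1 ^ 2 + p.2 ^ 2).toNat = m)).card = D.card := by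
    symm
    apply Finset.card_eq_sum_card_fiberwise
    intro p hp
    rw [hD, Finset.mem_coe, Finset.mem_filter] at hp
    simp only [Finset.mem_coe, Finset.mem_range]
    omega
  have step3 : D.card ≤ (2 * s + 1) ^ 2 := by
    calc D.card ≤ (SB ×ˢ SB).card := Finset.card_le_card (Finset.filter_subset _ _)
      _ = SB.card * SB.card := Finset.card_product _ _
      _ = (2 * s + 1) * (2 * s + 1) := by
          rw [hSB, bxI, Int.card_Icc]
          congr 1 <;> omega
      _ = (2 * s + 1) ^ 2 := by ring
  have e := Finset.sum_congr rfl step1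
  have h1 : ∑ m ∈ Finset.range (N + 1), r2 m ≤ (2 * s + 1) ^ 2 :=
    (e.trans step2).trans_le step3
  have hsum : (∑ m ∈ Finset.range (N + 1), (r2 m : ℝ)) ≤ (((2 * s + 1) ^ 2 : ℕ) : ℝ) := by
    exact_mod_cast h1
  have hs_le : (s : ℝ) ≤ Real.sqrt (Real.sqrt x) := Nat.floor_le (Real.sqrt_nonneg _)
  have hu1 : (1 : ℝ) ≤ Real.sqrt (Real.sqrt x) := by
    rw [show (1 : ℝ) = Real.sqrt 1 by simp]
    exact Real.sqrt_le_sqrt hsx1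
  have hu2 : Real.sqrt (Real.sqrt x) ^ 2 = Real.sqrt x := Real.sq_sqrt hsx0
  have hfin : (((2 * s + 1) ^ 2 : ℕ) : ℝ) ≤ (9 : ℝ) * Real.sqrt x := by
    push_cast
    nlinarith [hs_le, hu1, hu2, Nat.cast_nonneg (α := ℝ) s]
  linarith

/-- There is `C > 0` such that `|S(x) − 2·M(x)| ≤ C·x^{1/2}` for all `x ≥ 1`. -/
theorem S_approx_two_M :
    ∃ C : ℝ, 0 < C ∧ ∀ x : ℝ, 1 ≤ x →
      |(S x : ℝ) - 2 * M x| ≤ C * x ^ ((1 : ℝ) / 2) := by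
  refine ⟨9, by norm_num, fun x hx => ?_⟩
  have hx0 : (0 : ℝ) ≤ x := le_trans zero_le_one hx
  have hsx0 : (0 : ℝ) ≤ Real.sqrt x := Real.sqrt_nonneg x
  set N := ⌊Real.sqrt x⌋₊ with hN
  have hxr : x ^ ((1 : ℝ) / 2) = Real.sqrt x := (Real.sqrt_eq_rpow x).symm
  have hM : M x = ∑ m ∈ Finset.range (N + 1), (r2 m : ℝ) * Real.sqrt (x - (m : ℝ) ^ 2) := by
    rw [M]
    exact Finset.sum_congr rfl fun m _ => by rw [Real.sqrt_eq_rpow]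
  have hS : (S x : ℝ)
      = ∑ m ∈ Finset.range (N + 1), (r2 m : ℝ) * (cnt x (x - (m : ℝ) ^ 2) : ℝ) := by
    rw [S_eq x hx]
    push_cast
    rfl
  have key : (S x : ℝ) - 2 * M x
      = ∑ m ∈ Finset.range (N + 1),
          (r2 m : ℝ) * ((cnt x (x - (m : ℝ) ^ 2) : ℝ) - 2 * Real.sqrt (x - (m : ℝ) ^ 2)) := by
    rw [hS, hM, Finset.mul_sum, ← Finset.sum_sub_distrib]
    exact Finset.sum_congr rfl fun m _ => by ring
  rw [key, hxr]
  calc |∑ m ∈ Finset.range (N + 1),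
          (r2 m : ℝ) * ((cnt x (x - (m : ℝ) ^ 2) : ℝ) - 2 * Real.sqrt (x - (m : ℝ) ^ 2))|
      ≤ ∑ m ∈ Finset.range (N + 1),
          |(r2 m : ℝ) * ((cnt x (x - (m : ℝ) ^ 2) : ℝ) - 2 * Real.sqrt (x - (m : ℝ) ^ 2))| :=
        Finset.abs_sum_le_sum_abs _ _
    _ ≤ ∑ m ∈ Finset.range (N + 1), (r2 m : ℝ) := by
        apply Finset.sum_le_sum
        intro m hm
        rw [Finset.mem_range] at hm
        have hmsx : (m : ℝ) ≤ Real.sqrt x := by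
          have h1 : m ≤ N := by omega
          calc (m : ℝ) ≤ (N : ℝ) := by exact_mod_cast h1
            _ ≤ Real.sqrt x := Nat.floor_le hsx0
        have ht0 : (0 : ℝ) ≤ x - (m : ℝ) ^ 2 := by
          have := Real.sq_sqrt hx0
          nlinarith [Nat.cast_nonneg (α := ℝ) m]
        have htx : x - (m : ℝ) ^ 2 ≤ x := by nlinarith [sq_nonneg ((m : ℝ))]
        rw [abs_mul, abs_of_nonneg (by positivity : (0 : ℝ) ≤ (r2 m : ℝ))]
        calc (r2 m : ℝ) * |(cnt x (x - (m : ℝ) ^ 2) : ℝ) - 2 * Real.sqrt (x - (m : ℝ) ^ 2)|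
            ≤ (r2 m : ℝ) * 1 :=
              mul_le_mul_of_nonneg_left (cnt_bound hx ht0 htx) (by positivity)
          _ = (r2 m : ℝ) := mul_one _
    _ ≤ 9 * Real.sqrt x := r2sum_le x hx
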